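/- Fix d ∈ {1,...,9}. For each n ≥ 1 define P(d,n) = (1/n)·Σ_{i=1}^{n} c_d(i)/i, where c_d(i) is the number of integers in {1,...,i} with decimal leading digit d. Then the subsequence n ↦ P(d, d·10^n − 1) converges to α_d = (9 + 10·ln 10 + 9(d+1)·ln(1 − 1/(d+1)))/(81d). -/

import Mathlib

open Finset

/-- The leading (first) decimal digit of a positive integer. -/
def leadingDigit (n : ℕ) : ℕ := n / 10 ^ (Nat.log 10 n)

/-- The number of integers in {1,...,i} whose decimal leading digit equals d. -/
def ldCount (d i : ℕ) : ℕ := ((Finset.Icc 1 i).filter (fun j => leadingDigit j = d)).card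

/-- Probability that the leading digit is d when i is uniform on {1,...,n} and j uniform on {1,...,i}. -/
noncomputable def P (d n : ℕ) : ℝ := (1 / (n : ℝ)) * ∑ i ∈ Finset.Icc 1 n, (ldCount d i : ℝ) / i

open Filter Real Topology

noncomputable def Hh (m : ℕ) : ℝ := ∑ i ∈ Finset.Icc 1 m, (1 : ℝ) / i
noncomputable def Lg (m : ℕ) : ℝ := ∑ j ∈ Finset.Icc 1 m, Real.log j
noncomputable def del (j : ℕ) : ℝ := Hh (j-1) - Real.log j - Real.eulerMascheroniConstant
noncomputable def sErr (m : ℕ) : ℝ := Lg m - (m:ℝ) * Real.log m + m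

lemma Hh_eq (m : ℕ) : Hh m = (harmonic m : ℝ) := by
  rw [Hh, harmonic]
  push_cast
  rw [show Finset.Icc 1 m = Finset.Ico 1 (m+1) from rfl, Finset.sum_Ico_eq_sum_range]
  simp [one_div, add_comm]

lemma Icc_to_range (g : ℕ → ℝ) (N : ℕ) :
    ∑ j ∈ Finset.Icc 1 N, g j = ∑ i ∈ Finset.range N, g (i+1) := by
  rw [show Finset.Icc 1 N = Finset.Ico 1 (N+1) from rfl, Finset.sum_Ico_eq_sum_range]
  simp [add_comm]

lemma sum_Icc_inv_eq {j N : ℕ} (h1 : 1 ≤ j) (h2 : j ≤ N) :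
    ∑ i ∈ Finset.Icc j N, (1 : ℝ) / i = Hh N - Hh (j-1) := by
  have : Hh (j-1) + ∑ i ∈ Finset.Icc j N, (1 : ℝ) / i = Hh N := by
    rw [Hh, Hh, show Finset.Icc 1 (j-1) = Finset.Ico 1 j by ext x; simp; omega,
      show Finset.Icc j N = Finset.Ico j (N+1) from rfl,
      show Finset.Icc 1 N = Finset.Ico 1 (N+1) from rfl]
    exact Finset.sum_Ico_consecutive _ h1 (by omega)
  linarith

lemma Lg_split {a b : ℕ} (h1 : 1 ≤ a) (h2 : a - 1 ≤ b) :
    ∑ j ∈ Finset.Icc a b, Real.log j = Lg b - Lg (a-1) := by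
  have : Lg (a-1) + ∑ j ∈ Finset.Icc a b, Real.log j = Lg b := by
    rw [Lg, Lg, show Finset.Icc 1 (a-1) = Finset.Ico 1 a by ext x; simp; omega,
      show Finset.Icc a b = Finset.Ico a (b+1) from rfl,
      show Finset.Icc 1 b = Finset.Ico 1 (b+1) from rfl]
    exact Finset.sum_Ico_consecutive _ h1 (by omega)
  linarith

lemma swap_sum (d N : ℕ) :
    ∑ i ∈ Finset.Icc 1 N, (ldCount d i : ℝ) / i
      = ∑ j ∈ (Finset.Icc 1 N).filter (fun j => leadingDigit j = d), (Hh N - Hh (j-1)) := by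
  have step1 : ∀ i : ℕ, (ldCount d i : ℝ) / i
      = ∑ j ∈ Finset.Icc 1 i, (if leadingDigit j = d then (1:ℝ)/i else 0) := by
    intro i
    rw [ldCount, Finset.card_filter]
    push_cast
    rw [Finset.sum_div]
    apply Finset.sum_congr rfl
    intro j _
    split <;> simp
  calc ∑ i ∈ Finset.Icc 1 N, (ldCount d i : ℝ) / i
      = ∑ i ∈ Finset.Ico 1 (N+1), ∑ j ∈ Finset.Ico 1 (i+1), (if leadingDigit j = d then (1:ℝ)/i else 0) := by
        apply Finset.sum_congr rfl; intro i _; exact step1 i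
    _ = ∑ j ∈ Finset.Ico 1 (N+1), ∑ i ∈ Finset.Ico j (N+1), (if leadingDigit j = d then (1:ℝ)/i else 0) := by
        rw [Finset.sum_Ico_Ico_comm]
    _ = ∑ j ∈ (Finset.Icc 1 N).filter (fun j => leadingDigit j = d), (Hh N - Hh (j-1)) := by
        rw [Finset.sum_filter]
        apply Finset.sum_congr rfl
        intro j hj
        simp only [Finset.mem_Ico] at hj
        by_cases h : leadingDigit j = d
        · simp only [if_pos h]
          rw [show Finset.Ico j (N+1) = Finset.Icc j N from rfl]
          exact sum_Icc_inv_eq hj.1 (by omega)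
        · simp only [if_neg h]
          exact Finset.sum_const_zero

lemma leadingDigit_eq_iff {d k j : ℕ} (hd : 1 ≤ d) (hd9 : d ≤ 9)
    (h1 : d * 10 ^ k ≤ j) (h2 : j < (d+1) * 10 ^ k) : leadingDigit j = d := by
  have hlog : Nat.log 10 j = k := by
    apply Nat.log_eq_of_pow_le_of_lt_pow
    · calc 10 ^ k = 1 * 10 ^ k := (one_mul _).symm
        _ ≤ d * 10 ^ k := Nat.mul_le_mul_right _ hd
        _ ≤ j := h1
    · calc j < (d+1) * 10 ^ k := h2
        _ ≤ 10 * 10 ^ k := Nat.mul_le_mul_right _ (by omega)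
        _ = 10 ^ (k+1) := by ring
  rw [leadingDigit, hlog]
  exact Nat.div_eq_of_lt_le h1 h2

lemma leadingDigit_mem {d j : ℕ} (hj : 1 ≤ j) (hld : leadingDigit j = d) :
    d * 10 ^ (Nat.log 10 j) ≤ j ∧ j < (d+1) * 10 ^ (Nat.log 10 j) := by
  have hpos : 0 < (10:ℕ) ^ (Nat.log 10 j) := Nat.pow_pos (by norm_num)
  rw [leadingDigit] at hld
  constructor
  · rw [← hld]; exact Nat.div_mul_le_self j _
  · rw [← hld]
    rw [← Nat.div_lt_iff_lt_mul hpos]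
    omega

lemma block_decomp {d : ℕ} (hd : 1 ≤ d) (hd9 : d ≤ 9) (n : ℕ) :
    (Finset.Icc 1 (d * 10 ^ n - 1)).filter (fun j => leadingDigit j = d)
      = (Finset.range n).biUnion (fun k => Finset.Icc (d * 10 ^ k) ((d+1) * 10 ^ k - 1)) := by
  ext j
  simp only [Finset.mem_filter, Finset.mem_Icc, Finset.mem_biUnion, Finset.mem_range]
  constructor
  · rintro ⟨⟨hj1, hj2⟩, hld⟩
    obtain ⟨ha, hb⟩ := leadingDigit_mem hj1 hld
    refine ⟨Nat.log 10 j, ?_, ha, by omega⟩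
    by_contra hkn
    push_neg at hkn
    have h10 : (10:ℕ) ^ n ≤ 10 ^ (Nat.log 10 j) := Nat.pow_le_pow_right (by norm_num) hkn
    have hdd : d * 10 ^ n ≤ d * 10 ^ (Nat.log 10 j) := Nat.mul_le_mul_left _ h10
    omega
  · rintro ⟨k, hkn, h1, h2⟩
    have hpos : 0 < (10:ℕ) ^ k := Nat.pow_pos (by norm_num)
    have hd10 : (d+1) * 10 ^ k ≤ d * 10 ^ n := by
      calc (d+1) * 10 ^ k ≤ d * 10 * 10 ^ k := Nat.mul_le_mul_right _ (by omega)
        _ = d * 10 ^ (k+1) := by ring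
        _ ≤ d * 10 ^ n := Nat.mul_le_mul_left _ (Nat.pow_le_pow_right (by norm_num) hkn)
    have h1' : 1 * 1 ≤ d * 10 ^ k := Nat.mul_le_mul hd hpos
    have h2' : 1 * (10:ℕ)^k ≤ (d+1) * 10 ^ k := Nat.mul_le_mul (by omega) le_rfl
    refine ⟨⟨by omega, by omega⟩, leadingDigit_eq_iff hd hd9 h1 (by omega)⟩

lemma block_disjoint {d : ℕ} (hd : 1 ≤ d) (n : ℕ) :
    ∀ k ∈ Finset.range n, ∀ l ∈ Finset.range n, k ≠ l →
      Disjoint (Finset.Icc (d * 10 ^ k) ((d+1) * 10 ^ k - 1))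
        (Finset.Icc (d * 10 ^ l) ((d+1) * 10 ^ l - 1)) := by
  have key : ∀ k l : ℕ, k < l →
      Disjoint (Finset.Icc (d * 10 ^ k) ((d+1) * 10 ^ k - 1))
        (Finset.Icc (d * 10 ^ l) ((d+1) * 10 ^ l - 1)) := by
    intro k l hkl
    apply Finset.disjoint_left.mpr
    intro x hx hx'
    simp only [Finset.mem_Icc] at hx hx'
    have h1 : (d+1) * 10 ^ k ≤ d * 10 ^ l := by
      calc (d+1) * 10 ^ k ≤ d * 10 * 10 ^ k := Nat.mul_le_mul_right _ (by omega)
        _ = d * 10 ^ (k+1) := by ring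
        _ ≤ d * 10 ^ l := Nat.mul_le_mul_left _ (Nat.pow_le_pow_right (by norm_num) hkl)
    have hpos : (1:ℕ) * 10 ^ k ≤ (d+1) * 10 ^ k :=
      Nat.mul_le_mul (by omega) le_rfl
    have hp2 : 0 < (10:ℕ) ^ k := Nat.pow_pos (by norm_num)
    omega
  intro k _ l _ hkl
  rcases Nat.lt_or_ge k l with h | h
  · exact key k l h
  · exact (key l k (by omega)).symm

lemma tendsto_del : Tendsto del atTop (𝓝 0) := by
  rw [← tendsto_add_atTop_iff_nat 1]
  have h : ∀ j : ℕ, del (j+1)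
      = ((harmonic j : ℝ) - Real.log ((j:ℝ)+1)) - Real.eulerMascheroniConstant := by
    intro j
    simp only [del, Nat.add_sub_cancel, Hh_eq]
    push_cast
    ring
  rw [tendsto_congr h]
  have := Real.tendsto_harmonic_sub_log_add_one.sub_const Real.eulerMascheroniConstant
  simpa using this

lemma cesaro_absdel :
    Tendsto (fun N : ℕ => (N:ℝ)⁻¹ * ∑ j ∈ Finset.Icc 1 N, |del j|) atTop (𝓝 0) := by
  have h1 : Tendsto (fun i : ℕ => |del (i+1)|) atTop (𝓝 0) := by
    have := (tendsto_del.comp (tendsto_add_atTop_nat 1)).abs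
    simpa using this
  have h2 := h1.cesaro
  apply h2.congr
  intro N
  rw [Icc_to_range]

lemma tendsto_v : Tendsto (fun i : ℕ => (i:ℝ) * (Real.log ((i:ℝ)+1) - Real.log i)) atTop (𝓝 1) := by
  have h := (Real.tendsto_mul_log_one_add_div_atTop 1).comp
    (tendsto_natCast_atTop_atTop (R := ℝ))
  apply h.congr'
  filter_upwards [eventually_ge_atTop 1] with i hi
  have hi' : (0:ℝ) < i := by exact_mod_cast hi
  simp only [Function.comp_apply]
  rw [← Real.log_div (by positivity) (ne_of_gt hi')]
  congr 2
  field_simp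

lemma sum_v (m : ℕ) : ∑ i ∈ Finset.range m, (i:ℝ) * (Real.log ((i:ℝ)+1) - Real.log i)
    = (m:ℝ) * Real.log m - Lg m := by
  have h1 : ∀ i : ℕ, (i:ℝ) * (Real.log ((i:ℝ)+1) - Real.log i)
      = ((((i+1:ℕ)):ℝ) * Real.log ((i+1:ℕ)) - (i:ℝ) * Real.log i) - Real.log ((i+1:ℕ)) := by
    intro i; push_cast; ring
  rw [Finset.sum_congr rfl (fun i _ => h1 i), Finset.sum_sub_distrib,
    Finset.sum_range_sub (fun j : ℕ => (j:ℝ) * Real.log j)]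
  rw [Lg, Icc_to_range (fun j : ℕ => Real.log j)]
  simp

lemma tendsto_sErr_div : Tendsto (fun m : ℕ => sErr m / m) atTop (𝓝 0) := by
  have hc := tendsto_v.cesaro
  have h2 : Tendsto (fun m : ℕ =>
      1 - (m:ℝ)⁻¹ * ∑ i ∈ Finset.range m, (i:ℝ) * (Real.log ((i:ℝ)+1) - Real.log i))
      atTop (𝓝 0) := by
    have := (tendsto_const_nhds (x := (1:ℝ)) (f := atTop (α := ℕ))).sub hc
    simpa using this
  apply h2.congr'
  filter_upwards [eventually_ge_atTop 1] with m hm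
  have hm' : (0:ℝ) < m := by exact_mod_cast hm
  rw [sum_v, sErr]
  field_simp
  ring

lemma ratio_lim (α β γ' δ' : ℝ) (hγ : γ' ≠ 0) :
    Tendsto (fun n : ℕ => (α * 10 ^ n + β) / (γ' * 10 ^ n + δ')) atTop (𝓝 (α / γ')) := by
  have hx : Tendsto (fun n : ℕ => ((1:ℝ)/10) ^ n) atTop (𝓝 0) :=
    tendsto_pow_atTop_nhds_zero_of_lt_one (by norm_num) (by norm_num)
  have h1 : Tendsto (fun n : ℕ => (α + β * ((1:ℝ)/10)^n) / (γ' + δ' * ((1:ℝ)/10)^n))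
      atTop (𝓝 (α / γ')) := by
    have hnum := (tendsto_const_nhds (x := α) (f := atTop (α := ℕ))).add (hx.const_mul β)
    have hden := (tendsto_const_nhds (x := γ') (f := atTop (α := ℕ))).add (hx.const_mul δ')
    have := hnum.div hden (by simpa using hγ)
    rw [mul_zero, mul_zero, add_zero, add_zero] at this
    exact this
  apply h1.congr
  intro n
  have hxy : ((1:ℝ)/10)^n * 10^n = 1 := by
    rw [← mul_pow]; norm_num
  have e1 : α * 10^n + β = (α + β*((1:ℝ)/10)^n) * 10^n := by
    rw [add_mul, mul_assoc, hxy, mul_one]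
  have e2 : γ' * 10^n + δ' = (γ' + δ'*((1:ℝ)/10)^n) * 10^n := by
    rw [add_mul, mul_assoc, hxy, mul_one]
  rw [e1, e2, mul_div_mul_right _ _ (by positivity : ((10:ℝ)^n) ≠ 0)]

lemma tendsto_k_pow : Tendsto (fun k : ℕ => (k:ℝ) * ((1:ℝ)/10)^k) atTop (𝓝 0) := by
  have h := hasSum_coe_mul_geometric_of_norm_lt_one
    (r := (1:ℝ)/10) (by rw [Real.norm_eq_abs, abs_of_pos] <;> norm_num)
  exact h.summable.tendsto_atTop_zero

lemma arith_geom :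
    Tendsto (fun n : ℕ => (∑ k ∈ Finset.range n, ((n:ℝ) - k) * 10 ^ k) / 10 ^ n)
      atTop (𝓝 (10/81)) := by
  have hs := hasSum_coe_mul_geometric_of_norm_lt_one
    (r := (1:ℝ)/10) (by rw [Real.norm_eq_abs, abs_of_pos] <;> norm_num)
  have hval : ((1:ℝ)/10) / (1 - 1/10)^2 = 10/81 := by norm_num
  rw [hval] at hs
  have h1 := hs.tendsto_sum_nat.comp (tendsto_add_atTop_nat 1)
  apply h1.congr
  intro n
  simp only [Function.comp_apply]
  rw [Finset.sum_div]
  rw [Finset.sum_range_succ']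
  simp only [Nat.cast_zero, zero_mul, add_zero]
  rw [← Finset.sum_range_reflect]
  apply Finset.sum_congr rfl
  intro k hk
  simp only [Finset.mem_range] at hk
  have h1 : n - 1 - k + 1 = n - k := by omega
  rw [h1]
  have h2 : ((n - k : ℕ) : ℝ) = (n:ℝ) - k := by
    have : k ≤ n := by omega
    push_cast [this]; ring
  rw [h2]
  have hnk : (10:ℝ)^(n-k) * 10^k = 10^n := by
    rw [← pow_add]; congr 1; omega
  have h3 : ((1:ℝ)/10) ^ (n - k) = 10^k / 10^n := by
    rw [div_pow, one_pow, div_eq_div_iff (by positivity) (by positivity), one_mul, ← hnk]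
    ring
  rw [h3]
  ring

lemma geom_null {w : ℕ → ℝ} (hw : Tendsto w atTop (𝓝 0)) :
    Tendsto (fun n : ℕ => (∑ k ∈ Finset.range n, (10:ℝ)^k * w k) / 10 ^ n) atTop (𝓝 0) := by
  rw [NormedAddCommGroup.tendsto_nhds_zero]
  intro ε hε
  obtain ⟨K, hK⟩ := (Metric.tendsto_atTop.mp hw) (ε/4) (by linarith)
  set C := ∑ k ∈ Finset.range K, (10:ℝ)^k * |w k| with hC
  have hCn : Tendsto (fun n : ℕ => C / (10:ℝ)^n) atTop (𝓝 0) :=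
    tendsto_const_nhds.div_atTop (tendsto_pow_atTop_atTop_of_one_lt (by norm_num))
  filter_upwards [eventually_ge_atTop K, hCn.eventually_lt_const (show (0:ℝ) < ε/2 by linarith)]
    with n hn hCln
  have hpow : (0:ℝ) < 10 ^ n := by positivity
  have habs : ∀ k : ℕ, |(10:ℝ)^k * w k| = (10:ℝ)^k * |w k| := by
    intro k
    rw [abs_mul, abs_of_pos (by positivity : (0:ℝ) < 10^k)]
  have hsplit : ∑ k ∈ Finset.range K, (10:ℝ)^k * w k + ∑ k ∈ Finset.Ico K n, (10:ℝ)^k * w k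
      = ∑ k ∈ Finset.range n, (10:ℝ)^k * w k := by
    rw [Finset.range_eq_Ico, Finset.range_eq_Ico]
    exact Finset.sum_Ico_consecutive (fun k => (10:ℝ)^k * w k) (Nat.zero_le _) hn
  have hb1 : |∑ k ∈ Finset.range K, (10:ℝ)^k * w k| ≤ C := by
    refine (Finset.abs_sum_le_sum_abs _ _).trans ?_
    rw [hC]
    apply Finset.sum_le_sum
    intro k _
    rw [habs k]
  have hb2 : |∑ k ∈ Finset.Ico K n, (10:ℝ)^k * w k| ≤ (ε/4) * 10 ^ n := by
    refine (Finset.abs_sum_le_sum_abs _ _).trans ?_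
    have step : ∑ k ∈ Finset.Ico K n, |(10:ℝ)^k * w k| ≤ ∑ k ∈ Finset.Ico K n, (10:ℝ)^k * (ε/4) := by
      apply Finset.sum_le_sum
      intro k hk
      rw [habs k]
      apply mul_le_mul_of_nonneg_left _ (by positivity)
      have := hK k (Finset.mem_Ico.mp hk).1
      rw [Real.dist_eq, sub_zero] at this
      linarith
    refine step.trans ?_
    rw [← Finset.sum_mul, mul_comm (ε/4) ((10:ℝ)^n)]
    apply mul_le_mul_of_nonneg_right _ (by linarith)
    have h1 : ∑ k ∈ Finset.Ico K n, (10:ℝ)^k ≤ ∑ k ∈ Finset.range n, (10:ℝ)^k := by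
      apply Finset.sum_le_sum_of_subset_of_nonneg
      · rw [Finset.range_eq_Ico]
        exact Finset.Ico_subset_Ico (Nat.zero_le _) le_rfl
      · intro k _ _; positivity
    refine h1.trans ?_
    rw [geom_sum_eq (by norm_num : (10:ℝ) ≠ 1)]
    have : (0:ℝ) < 10 ^ n := by positivity
    rw [div_le_iff₀ (by norm_num : (0:ℝ) < 10 - 1)]
    nlinarith
  rw [Real.norm_eq_abs, abs_div, abs_of_pos hpow, div_lt_iff₀ hpow]
  calc |∑ k ∈ Finset.range n, (10:ℝ)^k * w k|
      ≤ C + (ε/4) * 10 ^ n := by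
        rw [← hsplit]
        refine (abs_add_le _ _).trans ?_
        exact add_le_add hb1 hb2
    _ < ε * 10 ^ n := by
        rw [div_lt_iff₀ hpow] at hCln
        nlinarith

lemma key_lim (c : ℕ) (hc : 1 ≤ c) :
    Tendsto (fun k : ℕ => (Lg (c*10^k - 1) + ((c*10^k - 1 : ℕ):ℝ)) / 10^k
      - ((c:ℝ) * Real.log c + (c:ℝ) * k * Real.log 10)) atTop (𝓝 0) := by
  have hcR : (0:ℝ) < c := by exact_mod_cast hc
  have hx : Tendsto (fun k : ℕ => ((1:ℝ)/10)^k) atTop (𝓝 0) :=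
    tendsto_pow_atTop_nhds_zero_of_lt_one (by norm_num) (by norm_num)
  have hy : Tendsto (fun k : ℕ => (c:ℝ) * 10^k) atTop atTop :=
    (tendsto_pow_atTop_atTop_of_one_lt (by norm_num : (1:ℝ) < 10)).const_mul_atTop hcR
  have h1y : Tendsto (fun k : ℕ => 1 - 1/((c:ℝ)*10^k)) atTop (𝓝 1) := by
    have := tendsto_const_nhds (x := (1:ℝ)) (f := atTop (α := ℕ))
    have h0 := tendsto_const_nhds (x := (1:ℝ)) (f := atTop (α := ℕ))|>.div_atTop hy
    simpa using this.sub h0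
  have hE : Tendsto (fun k : ℕ => Real.log (1 - 1/((c:ℝ)*10^k))) atTop (𝓝 0) := by
    have := (Real.continuousAt_log one_ne_zero).tendsto.comp h1y
    simpa [Function.comp_def] using this
  have hM : Tendsto (fun k : ℕ => c * 10^k - 1) atTop atTop := by
    apply tendsto_atTop_mono (fun k => ?_) tendsto_id
    have h10 : k < 10 ^ k := Nat.lt_pow_self (by norm_num)
    have : 10^k ≤ c * 10^k := Nat.le_mul_of_pos_left _ hc
    simp only [id_eq]
    omega
  have hMr : Tendsto (fun k : ℕ => ((c*10^k - 1 : ℕ):ℝ) / 10^k) atTop (𝓝 c) := by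
    have := (tendsto_const_nhds (x := (c:ℝ)) (f := atTop (α := ℕ))).sub hx
    rw [sub_zero] at this
    apply this.congr
    intro k
    have h1 : (1:ℕ) ≤ c * 10^k := Nat.one_le_iff_ne_zero.mpr (by positivity)
    have hcast : ((c*10^k - 1 : ℕ):ℝ) = (c:ℝ)*10^k - 1 := by
      push_cast [h1]; ring
    rw [hcast, div_pow, one_pow]
    field_simp
  have h5 : Tendsto (fun k : ℕ =>
      (sErr (c*10^k - 1) / ((c*10^k - 1 : ℕ):ℝ)) * (((c*10^k - 1:ℕ):ℝ) / 10^k))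
      atTop (𝓝 0) := by
    have := (tendsto_sErr_div.comp hM).mul hMr
    simpa using this
  have hF : Tendsto (fun k : ℕ =>
      -(((1:ℝ)/10)^k * Real.log c) + (c:ℝ) * Real.log (1 - 1/((c:ℝ)*10^k))
        - ((k:ℝ) * ((1:ℝ)/10)^k) * Real.log 10
        - ((1:ℝ)/10)^k * Real.log (1 - 1/((c:ℝ)*10^k))
        + (sErr (c*10^k - 1) / ((c*10^k - 1 : ℕ):ℝ)) * (((c*10^k - 1:ℕ):ℝ) / 10^k))
      atTop (𝓝 0) := by
    have t1 := (hx.mul_const (Real.log c)).neg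
    have t2 := hE.const_mul (c:ℝ)
    have t3 := tendsto_k_pow.mul_const (Real.log 10)
    have t4 := hx.mul hE
    have := (((t1.add t2).sub t3).sub t4).add h5
    simpa using this
  apply hF.congr'
  filter_upwards [eventually_ge_atTop 1] with k hk
  have h10k : (10:ℝ) ≤ 10^k := by
    calc (10:ℝ) = 10^1 := (pow_one _).symm
    _ ≤ 10^k := by apply pow_le_pow_right₀ (by norm_num) hk
  have h1 : (1:ℕ) ≤ c * 10^k := Nat.one_le_iff_ne_zero.mpr (by positivity)
  have hcast : ((c*10^k - 1 : ℕ):ℝ) = (c:ℝ)*10^k - 1 := by push_cast [h1]; ring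
  have hyk : (0:ℝ) < (c:ℝ)*10^k := by positivity
  have hc1 : (1:ℝ) ≤ (c:ℝ) := by exact_mod_cast hc
  have hypos : (10:ℝ) ≤ (c:ℝ)*10^k := by
    calc (10:ℝ) ≤ 10^k := h10k
    _ ≤ (c:ℝ)*10^k := le_mul_of_one_le_left (by positivity) hc1
  have hMpos : (0:ℝ) < (c:ℝ)*10^k - 1 := by nlinarith
  have hfrac : (0:ℝ) < 1 - 1/((c:ℝ)*10^k) := by
    rw [sub_pos, div_lt_one hyk]; nlinarith
  have hlog : Real.log ((c:ℝ)*10^k - 1)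
      = Real.log c + (k:ℝ)*Real.log 10 + Real.log (1 - 1/((c:ℝ)*10^k)) := by
    rw [show (c:ℝ)*10^k - 1 = ((c:ℝ)*10^k) * (1 - 1/((c:ℝ)*10^k)) by field_simp,
      Real.log_mul (ne_of_gt hyk) (ne_of_gt hfrac),
      Real.log_mul (ne_of_gt hcR) (by positivity : ((10:ℝ)^k) ≠ 0), Real.log_pow]
  have hsplit : Lg (c*10^k - 1) + ((c*10^k - 1 : ℕ):ℝ)
      = ((c*10^k - 1 : ℕ):ℝ) * Real.log ((c*10^k - 1 : ℕ):ℝ) + sErr (c*10^k - 1) := by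
    rw [sErr]; ring
  rw [hsplit, hcast, hlog]
  have hMne : ((c:ℝ)*10^k - 1) ≠ 0 := ne_of_gt hMpos
  have h10ne : ((10:ℝ)^k) ≠ 0 := by positivity
  generalize Real.log (1 - 1/((c:ℝ)*10^k)) = L
  simp only [one_div_pow]
  field_simp
  have hM2 : (-1 + (c:ℝ)*10^k) ≠ 0 := by intro h; apply hMne; linarith
  have hinv : (-1 + (c:ℝ)*10^k)⁻¹ * (-1 + (c:ℝ)*10^k) = 1 := inv_mul_cancel₀ hM2
  linear_combination sErr (c*10^k - 1) * hinv

theorem tendsto_P_phi (d : ℕ) (hd : d ∈ Finset.Icc 1 9) :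
    Filter.Tendsto (fun n : ℕ => P d (d * 10 ^ n - 1)) Filter.atTop
      (nhds ((9 + 10 * Real.log 10 + 9 * ((d : ℝ) + 1) * Real.log (1 - 1 / ((d : ℝ) + 1))) /
        (81 * d))) := by
  simp only [Finset.mem_Icc] at hd
  obtain ⟨hd1, hd9⟩ := hd
  have hdR : (0:ℝ) < d := by exact_mod_cast hd1
  set γ := Real.eulerMascheroniConstant with hγ
  -- exact decomposition, valid for every N
  have decomp : ∀ N : ℕ, P d N
      = ((ldCount d N : ℝ)/N) * (Hh N - Real.log N - γ)
        - (1/(N:ℝ)) * ∑ j ∈ (Finset.Icc 1 N).filter (fun j => leadingDigit j = d), del j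
        + (1/(N:ℝ)) * ∑ j ∈ (Finset.Icc 1 N).filter (fun j => leadingDigit j = d),
            (Real.log N - Real.log j) := by
    intro N
    rw [P, swap_sum]
    have e : ∀ j : ℕ, Hh N - Hh (j-1)
        = (Hh N - Real.log N - γ) - del j + (Real.log N - Real.log j) := by
      intro j; rw [del]; ring
    rw [Finset.sum_congr rfl (fun j _ => e j), Finset.sum_add_distrib,
      Finset.sum_sub_distrib, Finset.sum_const]
    rw [show ((Finset.Icc 1 N).filter (fun j => leadingDigit j = d)).card = ldCount d N from rfl,
      nsmul_eq_mul]
    ring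
  -- N_n → ∞
  have hNn : Tendsto (fun n : ℕ => d * 10^n - 1) atTop atTop := by
    apply tendsto_atTop_mono (fun k => ?_) tendsto_id
    have h10 : k < 10 ^ k := Nat.lt_pow_self (by norm_num)
    have : 10^k ≤ d * 10^k := Nat.le_mul_of_pos_left _ hd1
    simp only [id_eq]
    omega
  -- first term tends to 0
  have hHl : Tendsto (fun N : ℕ => Hh N - Real.log N - γ) atTop (𝓝 0) := by
    have := Real.tendsto_harmonic_sub_log.sub_const γ
    rw [hγ, sub_self] at this
    apply this.congr
    intro N; rw [Hh_eq]
  have hA : Tendsto (fun N : ℕ => ((ldCount d N : ℝ)/N) * (Hh N - Real.log N - γ))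
      atTop (𝓝 0) := by
    refine squeeze_zero_norm (a := fun N => ‖Hh N - Real.log N - γ‖) (fun N => ?_)
      (by simpa using hHl.norm)
    rw [norm_mul]
    have hle : ‖(ldCount d N : ℝ)/N‖ ≤ 1 := by
      rw [Real.norm_eq_abs, abs_of_nonneg (by positivity)]
      rcases Nat.eq_zero_or_pos N with h | h
      · simp [h]
      · rw [div_le_one (by exact_mod_cast h)]
        have h2 := Finset.card_filter_le (Finset.Icc 1 N) (fun j => leadingDigit j = d)
        rw [Nat.card_Icc] at h2
        have : ldCount d N ≤ N := by rw [ldCount]; omega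
        exact_mod_cast this
    calc ‖(ldCount d N : ℝ)/N‖ * ‖Hh N - Real.log N - γ‖
        ≤ 1 * ‖Hh N - Real.log N - γ‖ := mul_le_mul_of_nonneg_right hle (norm_nonneg _)
      _ = ‖Hh N - Real.log N - γ‖ := one_mul _
  -- second term tends to 0
  have hB : Tendsto (fun N : ℕ =>
      (1/(N:ℝ)) * ∑ j ∈ (Finset.Icc 1 N).filter (fun j => leadingDigit j = d), del j)
      atTop (𝓝 0) := by
    refine squeeze_zero_norm (fun N => ?_) cesaro_absdel
    have h1 : ‖(1/(N:ℝ))‖ = (N:ℝ)⁻¹ := by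
      rw [Real.norm_eq_abs, abs_of_nonneg (by positivity), one_div]
    rw [norm_mul, h1]
    apply mul_le_mul_of_nonneg_left _ (by positivity)
    rw [Real.norm_eq_abs]
    refine (Finset.abs_sum_le_sum_abs _ _).trans ?_
    exact Finset.sum_le_sum_of_subset_of_nonneg (Finset.filter_subset _ _)
      (fun _ _ _ => abs_nonneg _)
  -- the main (third) term
  set C0 : ℝ := ((d:ℝ)+1)*Real.log ((d:ℝ)+1) - (d:ℝ)*Real.log d - 1 with hC0
  set w : ℕ → ℝ := fun k =>
    (Lg ((d+1)*10^k - 1) - Lg (d*10^k - 1)) / 10^k - (C0 + (k:ℝ)*Real.log 10) with hwdef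
  have hw : Tendsto w atTop (𝓝 0) := by
    have h1 := key_lim (d+1) (by omega)
    have h2 := key_lim d hd1
    have h3 := h1.sub h2
    rw [sub_zero] at h3
    apply h3.congr
    intro k
    have ha1 : (1:ℕ) ≤ d * 10^k := Nat.one_le_iff_ne_zero.mpr (by positivity)
    have hb1 : (1:ℕ) ≤ (d+1) * 10^k := Nat.one_le_iff_ne_zero.mpr (by positivity)
    have hca : ((d*10^k - 1 : ℕ):ℝ) = (d:ℝ)*10^k - 1 := by push_cast [ha1]; ring
    have hcb : (((d+1)*10^k - 1 : ℕ):ℝ) = ((d:ℝ)+1)*10^k - 1 := by push_cast [hb1]; ring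
    have h10ne : ((10:ℝ)^k) ≠ 0 := by positivity
    simp only [hwdef, hC0, hca, hcb]
    push_cast
    field_simp
    ring
  have hcN : ∀ n : ℕ, ((d*10^n - 1 : ℕ):ℝ) = (d:ℝ)*10^n - 1 := by
    intro n
    have h1 : (1:ℕ) ≤ d * 10^n := Nat.one_le_iff_ne_zero.mpr (by positivity)
    push_cast [h1]; ring
  have hS1N : Tendsto (fun n : ℕ =>
      (∑ k ∈ Finset.range n, (10:ℝ)^k) / ((d*10^n - 1 : ℕ):ℝ)) atTop (𝓝 ((1/9)/(d:ℝ))) := by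
    have h := ratio_lim (1/9) (-1/9) d (-1) (ne_of_gt hdR)
    apply h.congr
    intro n
    rw [hcN n, geom_sum_eq (by norm_num : (10:ℝ) ≠ 1)]
    norm_num
    ring
  have h10N : Tendsto (fun n : ℕ => (10:ℝ)^n / ((d*10^n - 1 : ℕ):ℝ)) atTop (𝓝 (1/(d:ℝ))) := by
    have h := ratio_lim 1 0 d (-1) (ne_of_gt hdR)
    apply h.congr
    intro n
    rw [hcN n]
    ring_nf
  have hrho : Tendsto (fun n : ℕ =>
      Real.log ((d*10^n - 1 : ℕ):ℝ) - Real.log d - (n:ℝ)*Real.log 10) atTop (𝓝 0) := by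
    have hy : Tendsto (fun n : ℕ => (d:ℝ) * 10^n) atTop atTop :=
      (tendsto_pow_atTop_atTop_of_one_lt (by norm_num : (1:ℝ) < 10)).const_mul_atTop hdR
    have h1y : Tendsto (fun n : ℕ => 1 - 1/((d:ℝ)*10^n)) atTop (𝓝 1) := by
      have h0 := tendsto_const_nhds (x := (1:ℝ)) (f := atTop (α := ℕ))|>.div_atTop hy
      simpa using (tendsto_const_nhds (x := (1:ℝ)) (f := atTop (α := ℕ))).sub h0
    have hE : Tendsto (fun n : ℕ => Real.log (1 - 1/((d:ℝ)*10^n))) atTop (𝓝 0) := by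
      have := (Real.continuousAt_log one_ne_zero).tendsto.comp h1y
      simpa [Function.comp_def] using this
    apply hE.congr'
    filter_upwards [eventually_ge_atTop 1] with n hn
    have h10k : (10:ℝ) ≤ 10^n := by
      calc (10:ℝ) = 10^1 := (pow_one _).symm
      _ ≤ 10^n := by apply pow_le_pow_right₀ (by norm_num) hn
    have hdc : (1:ℝ) ≤ (d:ℝ) := by exact_mod_cast hd1
    have hyk : (0:ℝ) < (d:ℝ)*10^n := by positivity
    have hypos : (10:ℝ) ≤ (d:ℝ)*10^n := by
      calc (10:ℝ) ≤ 10^n := h10k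
      _ ≤ (d:ℝ)*10^n := le_mul_of_one_le_left (by positivity) hdc
    have hfrac : (0:ℝ) < 1 - 1/((d:ℝ)*10^n) := by
      rw [sub_pos, div_lt_one hyk]; nlinarith
    rw [hcN n]
    rw [show (d:ℝ)*10^n - 1 = ((d:ℝ)*10^n) * (1 - 1/((d:ℝ)*10^n)) by field_simp,
      Real.log_mul (ne_of_gt hyk) (ne_of_gt hfrac),
      Real.log_mul (ne_of_gt hdR) (by positivity : ((10:ℝ)^n) ≠ 0), Real.log_pow]
    ring
  have hWn := geom_null hw
  -- combined limit for the main term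
  have p1 := hS1N.const_mul (Real.log d - C0)
  have p2 := hrho.mul hS1N
  have p3 := (arith_geom.mul h10N).mul_const (Real.log 10)
  have p4 := hWn.mul h10N
  have combined := ((p1.add p2).add p3).sub p4
  -- identify the main term with the combined expression, eventually
  have hG : Tendsto (fun n : ℕ =>
      (1/((d*10^n - 1 : ℕ):ℝ)) * ∑ j ∈ (Finset.Icc 1 (d*10^n - 1)).filter
          (fun j => leadingDigit j = d),
        (Real.log ((d*10^n - 1 : ℕ):ℝ) - Real.log j))
      atTop (𝓝 ((Real.log d - C0) * ((1/9)/(d:ℝ)) + 0 * ((1/9)/(d:ℝ))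
        + (10/81) * (1/(d:ℝ)) * Real.log 10 - 0 * (1/(d:ℝ)))) := by
    apply combined.congr
    intro n
    have h10ne : ((10:ℝ)^n) ≠ 0 := by positivity
    have haux : ∀ X : ℝ, (X/(10:ℝ)^n)*((10:ℝ)^n/((d*10^n - 1 : ℕ):ℝ))
        = X/((d*10^n - 1 : ℕ):ℝ) := by
      intro X
      rw [div_mul_div_comm, mul_comm X, mul_div_mul_left _ _ h10ne]
    have hdisj : (↑(Finset.range n) : Set ℕ).PairwiseDisjoint
        (fun k => Finset.Icc (d*10^k) ((d+1)*10^k - 1)) := by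
      intro k hk l hl hkl
      exact block_disjoint hd1 n k (by simpa using hk) l (by simpa using hl) hkl
    rw [block_decomp hd1 hd9 n, Finset.sum_biUnion hdisj]
    have inner : ∀ k ∈ Finset.range n,
        ∑ j ∈ Finset.Icc (d*10^k) ((d+1)*10^k - 1),
          (Real.log ((d*10^n - 1 : ℕ):ℝ) - Real.log j)
        = (10:ℝ)^k * Real.log ((d*10^n - 1 : ℕ):ℝ)
            - ((10:ℝ)^k*(C0 + (k:ℝ)*Real.log 10) + (10:ℝ)^k * w k) := by
      intro k _
      have hpk : 0 < (10:ℕ)^k := Nat.pow_pos (by norm_num)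
      have ha1 : (1:ℕ) ≤ d * 10^k := Nat.one_le_iff_ne_zero.mpr (by positivity)
      have hcard : (d+1)*10^k - 1 + 1 - d*10^k = 10^k := by
        have : d*10^k + 10^k = (d+1)*10^k := by ring
        omega
      rw [Finset.sum_sub_distrib, Finset.sum_const, Nat.card_Icc, hcard, nsmul_eq_mul,
        Lg_split ha1 (by omega)]
      have hwk : Lg ((d+1)*10^k - 1) - Lg (d*10^k - 1)
          = (10:ℝ)^k*(C0 + (k:ℝ)*Real.log 10) + (10:ℝ)^k * w k := by
        rw [hwdef]
        field_simp
        ring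
      rw [hwk]
      push_cast
      ring
    rw [Finset.sum_congr rfl inner]
    have e : ∀ k : ℕ, (10:ℝ)^k * Real.log ((d*10^n - 1 : ℕ):ℝ)
        - ((10:ℝ)^k*(C0 + (k:ℝ)*Real.log 10) + (10:ℝ)^k * w k)
        = Real.log ((d*10^n - 1 : ℕ):ℝ) * (10:ℝ)^k - C0 * (10:ℝ)^k
          - Real.log 10 * ((k:ℝ) * (10:ℝ)^k) - (10:ℝ)^k * w k := by
      intro k; ring
    rw [Finset.sum_congr rfl (fun k _ => e k), Finset.sum_sub_distrib, Finset.sum_sub_distrib,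
      Finset.sum_sub_distrib, ← Finset.mul_sum, ← Finset.mul_sum, ← Finset.mul_sum]
    have e2 : ∑ k ∈ Finset.range n, ((n:ℝ) - (k:ℝ)) * (10:ℝ)^k
        = (n:ℝ) * (∑ k ∈ Finset.range n, (10:ℝ)^k)
          - ∑ k ∈ Finset.range n, (k:ℝ) * (10:ℝ)^k := by
      rw [Finset.mul_sum, ← Finset.sum_sub_distrib]
      apply Finset.sum_congr rfl
      intro k _; ring
    rw [haux, haux, e2]
    ring
  -- assemble
  have final := ((hA.comp hNn).sub (hB.comp hNn)).add hG
  have heq : ∀ n : ℕ, ((fun N : ℕ => ((ldCount d N : ℝ)/N) * (Hh N - Real.log N - γ))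
        ∘ (fun n : ℕ => d * 10^n - 1)) n
      - ((fun N : ℕ =>
          (1/(N:ℝ)) * ∑ j ∈ (Finset.Icc 1 N).filter (fun j => leadingDigit j = d), del j)
        ∘ (fun n : ℕ => d * 10^n - 1)) n
      + (1/((d*10^n - 1 : ℕ):ℝ)) * ∑ j ∈ (Finset.Icc 1 (d*10^n - 1)).filter
          (fun j => leadingDigit j = d),
        (Real.log ((d*10^n - 1 : ℕ):ℝ) - Real.log j)
      = P d (d * 10^n - 1) := by
    intro n
    rw [decomp (d * 10^n - 1)]
    rfl
  have final2 := final.congr heq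
  convert final2 using 2
  have hne : ((d:ℝ)+1) ≠ 0 := by positivity
  have hlog1 : Real.log (1 - 1/((d:ℝ)+1)) = Real.log d - Real.log ((d:ℝ)+1) := by
    rw [show (1:ℝ) - 1/((d:ℝ)+1) = (d:ℝ)/((d:ℝ)+1) by
      rw [eq_div_iff hne, sub_mul, one_div_mul_cancel hne, one_mul]; ring,
      Real.log_div (ne_of_gt hdR) hne]
  rw [hlog1, hC0]
  field_simp
  ring
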